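/- Let $k$ be a commutative ring, $d \ge 2$, and $S = k[t_1,\dots,t_d]^{(2)}$ the second Veronese subring of the polynomial ring. Then $S$ decomposes as a direct sum of free modules over the polynomial subring $k[x_1,\dots,x_d]$ (where $x_i = t_i^2$): namely, $S = \bigoplus x_{i_1,j_1} x_{i_2,j_2} \cdots x_{i_r,j_r}\, k[x_1,\dots,x_d]$, where the sum ranges over all sequences $1 \le i_1 < j_1 < i_2 < j_2 < \dots < i_r < j_r \le d$ with $r \ge 0$ (the $r=0$ summand being $k[x_1,\dots,x_d]$), and $x_{i,j} = t_i t_j$. -/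

import Mathlib

open MvPolynomial

/-- The `k`-submodule `(∏_{i ∈ T} tᵢ) · k[t₁²,…,t_d²]` of `k[t₁,…,t_d]`.
For a set `T = {i₁ < j₁ < i₂ < j₂ < … < i_r < j_r}` of even cardinality this is the summand
`x_{i₁,j₁} x_{i₂,j₂} ⋯ x_{i_r,j_r} · k[x₁,…,x_d]` (where `xᵢ = tᵢ²`, `x_{i,j} = tᵢtⱼ`). -/
noncomputable def veroneseSummand (k : Type) [CommRing k] (d : ℕ) (T : Finset (Fin d)) :
    Submodule k (MvPolynomial (Fin d) k) :=
  Submodule.map (LinearMap.mulLeft k (∏ i ∈ T, X i))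
    (Subalgebra.toSubmodule
      (Algebra.adjoin k (Set.range fun i : Fin d => (X i : MvPolynomial (Fin d) k) ^ 2)))

open Finsupp

variable (k : Type) [CommRing k] (d : ℕ)

/-- Submodule of polynomials all of whose monomials satisfy `Q`. -/
def monSubmodule (Q : (Fin d →₀ ℕ) → Prop) : Submodule k (MvPolynomial (Fin d) k) where
  carrier := {p | ∀ m ∈ p.support, Q m}
  add_mem' := fun {a b} ha hb m hm => by
    rcases Finset.mem_union.1 (MvPolynomial.support_add hm) with h | h
    · exact ha m h
    · exact hb m h
  zero_mem' := by simp
  smul_mem' := fun c p hp m hm => hp m (MvPolynomial.support_smul hm)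

lemma mem_monSubmodule {Q : (Fin d →₀ ℕ) → Prop} {p : MvPolynomial (Fin d) k} :
    p ∈ monSubmodule k d Q ↔ ∀ m ∈ p.support, Q m := Iff.rfl

lemma prod_X_eq (T : Finset (Fin d)) :
    (∏ i ∈ T, X i : MvPolynomial (Fin d) k) = monomial (∑ i ∈ T, Finsupp.single i 1) 1 := by
  classical
  induction T using Finset.induction with
  | empty => simp [MvPolynomial.monomial_zero', MvPolynomial.C_1]
  | @insert a s ha ih =>
    rw [Finset.prod_insert ha, ih, Finset.sum_insert ha, MvPolynomial.X,
      MvPolynomial.monomial_mul, one_mul]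

lemma eT_apply (T : Finset (Fin d)) (j : Fin d) :
    (∑ i ∈ T, Finsupp.single i (1:ℕ)) j = if j ∈ T then 1 else 0 := by
  classical
  rw [Finsupp.finset_sum_apply]
  simp [Finsupp.single_apply, Finset.sum_ite_eq' T j fun _ => (1:ℕ)]

/-- The subalgebra of polynomials all of whose exponents are even. -/
def evenSubalgebra : Subalgebra k (MvPolynomial (Fin d) k) :=
      { carrier := {p | ∀ m ∈ p.support, ∀ i, Even (m i)}
        mul_mem' := fun {a b} ha hb m hm => by
          have := MvPolynomial.support_mul _ _ hm
          rcases Finset.mem_add.1 this with ⟨u, hu, v, hv, rfl⟩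
          exact fun i => (ha u hu i).add (hb v hv i)
        one_mem' := fun m hm i => by
          rw [show (1 : MvPolynomial (Fin d) k) = monomial 0 1 by simp] at hm
          have : m = 0 := Finset.mem_singleton.1 (MvPolynomial.support_monomial_subset hm)
          simp [this]
        add_mem' := fun {a b} ha hb m hm => by
          rcases Finset.mem_union.1 (MvPolynomial.support_add hm) with h | h
          · exact ha m h
          · exact hb m h
        zero_mem' := by simp
        algebraMap_mem' := fun r m hm i => by
          rw [MvPolynomial.algebraMap_eq, MvPolynomial.C_apply] at hm
          have : m = 0 := Finset.mem_singleton.1 (MvPolynomial.support_monomial_subset hm)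
          simp [this] }

lemma mem_evenSubalgebra {p : MvPolynomial (Fin d) k} :
    p ∈ evenSubalgebra k d ↔ ∀ m ∈ p.support, ∀ i, Even (m i) := Iff.rfl

/-- Membership in the adjoin of squares implies all exponents even. -/
lemma adjoin_le_even :
    (Algebra.adjoin k (Set.range fun i : Fin d => (X i : MvPolynomial (Fin d) k) ^ 2)) ≤
      evenSubalgebra k d := by
  rw [Algebra.adjoin_le_iff]
  rintro _ ⟨i, rfl⟩ m hm j
  rw [show ((fun i : Fin d => (X i : MvPolynomial (Fin d) k) ^ 2) i) =
      monomial (Finsupp.single i 2) 1 by simp [MvPolynomial.X_pow_eq_monomial]] at hm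
  have : m = Finsupp.single i 2 := Finset.mem_singleton.1 (MvPolynomial.support_monomial_subset hm)
  subst this
  rcases eq_or_ne i j with rfl | h <;> simp [Finsupp.single_apply, *]


/-- A monomial with all even exponents lies in the adjoin of the squares. -/
lemma monomial_mem_adjoin (m : Fin d →₀ ℕ) (c : k) (h : ∀ i, Even (m i)) :
    (monomial m c : MvPolynomial (Fin d) k) ∈
      Algebra.adjoin k (Set.range fun i : Fin d => (X i : MvPolynomial (Fin d) k) ^ 2) := by
  rw [MvPolynomial.monomial_eq]
  refine mul_mem (Subalgebra.algebraMap_mem _ c) ?_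
  rw [Finsupp.prod]
  refine Subalgebra.prod_mem _ fun i _ => ?_
  obtain ⟨e, he⟩ := h i
  have : (X i : MvPolynomial (Fin d) k) ^ m i = ((X i) ^ 2) ^ e := by
    rw [← pow_mul, he, two_mul]
  rw [this]
  exact pow_mem (Algebra.subset_adjoin (Set.mem_range_self i)) e

lemma veroneseSummand_eq (T : Finset (Fin d)) :
    veroneseSummand k d T = monSubmodule k d (fun m => ∀ i, Odd (m i) ↔ i ∈ T) := by
  classical
  ext p
  rw [veroneseSummand, Submodule.mem_map]
  constructor
  · rintro ⟨q, hq, rfl⟩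
    rw [Subalgebra.mem_toSubmodule] at hq
    intro m hm i
    rw [LinearMap.mulLeft_apply, prod_X_eq] at hm
    rcases Finset.mem_add.1 (MvPolynomial.support_mul _ _ hm) with ⟨u, hu, v, hv, rfl⟩
    have hu' : u = ∑ i ∈ T, Finsupp.single i 1 :=
      Finset.mem_singleton.1 (MvPolynomial.support_monomial_subset hu)
    have hv' : Even (v i) := adjoin_le_even k d hq v hv i
    subst hu'
    rw [Finsupp.add_apply, eT_apply]
    obtain ⟨e, he⟩ := hv'
    by_cases hi : i ∈ T <;> simp [hi, he, Nat.odd_iff, Nat.even_iff] at * <;> omega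
  · intro hp
    set eT : Fin d →₀ ℕ := ∑ i ∈ T, Finsupp.single i 1 with heT
    refine ⟨∑ m ∈ p.support, monomial (m - eT) (coeff m p), ?_, ?_⟩
    · rw [Subalgebra.mem_toSubmodule]
      refine sum_mem fun m hm => monomial_mem_adjoin k d _ _ fun i => ?_
      have h := hp m hm i
      rw [Finsupp.tsub_apply, heT, eT_apply]
      by_cases hi : i ∈ T
      · have : Odd (m i) := h.2 hi
        simp only [hi, if_true]
        rw [Nat.odd_iff] at this
        rw [Nat.even_sub (by omega)]
        simp [Nat.odd_iff, Nat.even_iff, this]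
      · have : ¬ Odd (m i) := fun h' => hi (h.1 h')
        rw [Nat.not_odd_iff_even] at this
        simpa [hi] using this
    · rw [LinearMap.mulLeft_apply, prod_X_eq, Finset.mul_sum]
      conv_rhs => rw [MvPolynomial.as_sum p]
      refine Finset.sum_congr rfl fun m hm => ?_
      rw [MvPolynomial.monomial_mul, one_mul]
      have hle : eT ≤ m := by
        rw [Finsupp.le_def]
        intro i
        rw [heT, eT_apply]
        by_cases hi : i ∈ T
        · have h3 : Odd (m i) := (hp m hm i).2 hi
          simp only [hi, if_true]
          rcases h3 with ⟨e, he⟩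
          omega
        · simp [hi]
      rw [add_tsub_cancel_of_le hle]

/-- Hironaka decomposition of the second Veronese subring `S` of `k[t₁,…,t_d]` (`d ≥ 2`):
the submodules `x_{i₁,j₁} ⋯ x_{i_r,j_r} · k[x₁,…,x_d]`, indexed by the subsets
`T = {i₁ < j₁ < ⋯ < i_r < j_r}` of even cardinality (with `r = 0` giving `k[x₁,…,x_d]`),
are independent and their sum is exactly `S` (the polynomials all of whose odd-degree
homogeneous components vanish). -/
theorem veronese2_hironaka (k : Type) [CommRing k] (d : ℕ) (hd : 2 ≤ d) :
    (iSupIndep fun T : {T : Finset (Fin d) // Even T.card} => veroneseSummand k d T.1) ∧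
    ∀ p : MvPolynomial (Fin d) k,
      (∀ m : ℕ, Odd m → homogeneousComponent m p = 0) ↔
        p ∈ ⨆ T : {T : Finset (Fin d) // Even T.card}, veroneseSummand k d T.1 := by
  classical
  constructor
  · intro T₀
    have hle : (⨆ (j : {T : Finset (Fin d) // Even T.card}) (_ : j ≠ T₀), veroneseSummand k d j.1)
        ≤ monSubmodule k d (fun m => ¬ (∀ i, Odd (m i) ↔ i ∈ T₀.1)) := by
      refine iSup_le fun j => iSup_le fun hj => ?_
      rw [veroneseSummand_eq]
      intro q hq m hm h
      exact hj (Subtype.ext (Finset.ext fun i => ((hq m hm i).symm.trans (h i))))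
    rw [Submodule.disjoint_def]
    intro x hx hx'
    simp only [veroneseSummand_eq] at hx
    have h2 := hle hx'
    rw [← MvPolynomial.support_eq_empty]
    exact Finset.eq_empty_iff_forall_notMem.2 fun m hm => h2 m hm (hx m hm)
  · intro p
    constructor
    · intro hodd
      have key : ∀ m ∈ p.support,
          (monomial m (coeff m p) : MvPolynomial (Fin d) k) ∈
            ⨆ T : {T : Finset (Fin d) // Even T.card}, veroneseSummand k d T.1 := by
        intro m hm
        have hdeg : Even m.degree := by
          by_contra h
          rw [Nat.not_even_iff_odd] at h
          have h0 := hodd m.degree h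
          have hc : coeff m (homogeneousComponent m.degree p) = coeff m p := by
            rw [coeff_homogeneousComponent, if_pos rfl]
          rw [h0, MvPolynomial.coeff_zero] at hc
          exact MvPolynomial.mem_support_iff.1 hm hc.symm
        rw [Finsupp.degree_apply, Finset.even_sum_iff_even_card_odd] at hdeg
        refine le_iSup (fun T : {T : Finset (Fin d) // Even T.card} => veroneseSummand k d T.1)
          ⟨m.support.filter fun i => Odd (m i), hdeg⟩ ?_
        simp only [veroneseSummand_eq]
        intro m' hm' i
        have : m' = m := Finset.mem_singleton.1 (MvPolynomial.support_monomial_subset hm')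
        subst this
        simp only [Finset.mem_filter, Finsupp.mem_support_iff]
        exact ⟨fun h => ⟨h.pos.ne', h⟩, fun h => h.2⟩
      rw [MvPolynomial.as_sum p]
      exact sum_mem key
    · intro hp n hn
      have hE : (⨆ T : {T : Finset (Fin d) // Even T.card}, veroneseSummand k d T.1)
          ≤ monSubmodule k d (fun m => Even m.degree) := by
        refine iSup_le fun T => ?_
        rw [veroneseSummand_eq]
        intro q hq m hm
        rw [Finsupp.degree_apply, Finset.even_sum_iff_even_card_odd]
        have heq : m.support.filter (fun i => Odd (m i)) = T.1 := by
          refine Finset.ext fun i => ?_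
          simp only [Finset.mem_filter, Finsupp.mem_support_iff]
          exact ⟨fun h => (hq m hm i).1 h.2, fun h => ⟨((hq m hm i).2 h).pos.ne', (hq m hm i).2 h⟩⟩
        rw [heq]
        exact T.2
      have hall := hE hp
      refine MvPolynomial.ext _ _ fun m => ?_
      rw [coeff_homogeneousComponent, MvPolynomial.coeff_zero]
      split_ifs with h
      · by_contra hc
        have hm : m ∈ p.support := MvPolynomial.mem_support_iff.2 hc
        have h4 : Even m.degree := hall m hm
        rw [h] at h4
        exact Nat.not_even_iff_odd.2 hn h4
      · rfl
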